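/- Let K*_{n1,n2}(·;q1,q2;x,y) be the bivariate Dunkl q-Szász-Mirakjan-Kantorovich-Stancu operator. Then for all n1,n2 ∈ ℕ⁺, 0<q1,q2<1, μ1,μ2>1/2, α1,α2,β1,β2 ≥ 0 and x,y ≥ 0, applying the operator to the function (u,v) ↦ u − x gives K*_{n1,n2}(e_{1,0}−x;q1,q2;x,y) = (n1/(n1+β1))·(α1/n1 + 1/([2]_{q1}[n1]_{q1})) + (2n1·q1/([2]_{q1}(n1+β1)) − 1)·x. -/

import Mathlib

open Real Filter


/-- The `q`-number `[x]_q = (1 - q^x)/(1 - q)` for a real exponent `x`. -/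
noncomputable def qNum (q x : ℝ) : ℝ := (1 - q ^ x) / (1 - q)

/-- `θ_k = 0` if `k` is even and `1` if `k` is odd. -/
def theta (k : ℕ) : ℕ := if Even k then 0 else 1

/-- The Dunkl `q`-gamma coefficients: `γ_{μ,q}(0) = 1`,
`γ_{μ,q}(k+1) = [2μθ_{k+1} + k + 1]_q ⬝ γ_{μ,q}(k)`. -/
noncomputable def gammaD (mu q : ℝ) : ℕ → ℝ
  | 0 => 1
  | k + 1 => qNum q (2 * mu * (theta (k + 1) : ℝ) + ((k : ℝ) + 1)) * gammaD mu q k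

/-- The Dunkl `q`-exponential `E_{μ,q}(x) = Σ q^{k(k-1)/2} x^k / γ_{μ,q}(k)`. -/
noncomputable def EDunkl (mu q x : ℝ) : ℝ :=
  ∑' k : ℕ, q ^ (k * (k - 1) / 2) * x ^ k / gammaD mu q k

/-- The Jackson `q`-integral `∫_a^b f(t) d_q t`. -/
noncomputable def jacksonInt (q : ℝ) (f : ℝ → ℝ) (a b : ℝ) : ℝ :=
  (1 - q) * (b * ∑' j : ℕ, q ^ j * f (b * q ^ j) - a * ∑' j : ℕ, q ^ j * f (a * q ^ j))

/-- Lower endpoint `[k + 2μθ_k]_q / (q^{k-2} [n]_q)`. -/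
noncomputable def lowB (q mu : ℝ) (n k : ℕ) : ℝ :=
  qNum q ((k : ℝ) + 2 * mu * (theta k : ℝ)) / (q ^ ((k : ℝ) - 2) * qNum q (n : ℝ))

/-- Upper endpoint `([k + 1 + 2μθ_k]_q - 1) / (q^{k-1} [n]_q) + 1/[n]_q`. -/
noncomputable def uppB (q mu : ℝ) (n k : ℕ) : ℝ :=
  (qNum q ((k : ℝ) + 1 + 2 * mu * (theta k : ℝ)) - 1) / (q ^ ((k : ℝ) - 1) * qNum q (n : ℝ))
    + 1 / qNum q (n : ℝ)

/-- The Dunkl `q`-Szász-Mirakjan-Kantorovich-Stancu operator `K̃_{n,q}(f;x)`. -/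
noncomputable def KT (n : ℕ) (q mu α β : ℝ) (f : ℝ → ℝ) (x : ℝ) : ℝ :=
  qNum q (n : ℝ) / EDunkl mu q (qNum q (n : ℝ) * x) *
    ∑' k : ℕ, (qNum q (n : ℝ) * x) ^ k / gammaD mu q k * q ^ (k * (k - 1) / 2) *
      jacksonInt q (fun t => f (((n : ℝ) * t + α) / ((n : ℝ) + β))) (lowB q mu n k) (uppB q mu n k)

/-- The bivariate Dunkl `q`-Szász-Mirakjan-Kantorovich-Stancu operator
`K*_{n₁,n₂}(f; q₁, q₂; x, y)`. -/
noncomputable def KB (n₁ n₂ : ℕ) (q₁ q₂ mu₁ mu₂ α₁ α₂ β₁ β₂ : ℝ) (f : ℝ → ℝ → ℝ)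
    (x y : ℝ) : ℝ :=
  qNum q₁ (n₁ : ℝ) * qNum q₂ (n₂ : ℝ) /
      (EDunkl mu₁ q₁ (qNum q₁ (n₁ : ℝ) * x) * EDunkl mu₂ q₂ (qNum q₂ (n₂ : ℝ) * y)) *
    ∑' k₁ : ℕ, ∑' k₂ : ℕ,
      (qNum q₁ (n₁ : ℝ) * x) ^ k₁ / gammaD mu₁ q₁ k₁ *
        ((qNum q₂ (n₂ : ℝ) * y) ^ k₂ / gammaD mu₂ q₂ k₂) *
        q₁ ^ (k₁ * (k₁ - 1) / 2) * q₂ ^ (k₂ * (k₂ - 1) / 2) *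
        jacksonInt q₂ (fun t =>
            jacksonInt q₁ (fun s =>
                f (((n₁ : ℝ) * s + α₁) / ((n₁ : ℝ) + β₁)) (((n₂ : ℝ) * t + α₂) / ((n₂ : ℝ) + β₂)))
              (lowB q₁ mu₁ n₁ k₁) (uppB q₁ mu₁ n₁ k₁))
          (lowB q₂ mu₂ n₂ k₂) (uppB q₂ mu₂ n₂ k₂)

lemma qNum_pos {q : ℝ} (hq0 : 0 < q) (hq1 : q < 1) {a : ℝ} (ha : 0 < a) : 0 < qNum q a := by
  unfold qNum
  apply div_pos
  · have : q ^ a < 1 := Real.rpow_lt_one hq0.le hq1 ha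
    linarith
  · linarith

lemma one_le_qNum {q : ℝ} (hq0 : 0 < q) (hq1 : q < 1) {a : ℝ} (ha : 1 ≤ a) : 1 ≤ qNum q a := by
  unfold qNum
  rw [le_div_iff₀ (by linarith)]
  have h : q ^ a ≤ q ^ (1:ℝ) := Real.rpow_le_rpow_of_exponent_ge hq0 hq1.le ha
  rw [Real.rpow_one] at h
  linarith

lemma qNum_succ {q : ℝ} (hq0 : 0 < q) (hq1 : q < 1) (a : ℝ) :
    qNum q (a + 1) = 1 + q * qNum q a := by
  unfold qNum
  rw [Real.rpow_add_one hq0.ne']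
  have h1 : (1:ℝ) - q ≠ 0 := by linarith
  field_simp
  ring

lemma qNum_two {q : ℝ} (hq0 : 0 < q) (hq1 : q < 1) : qNum q 2 = 1 + q := by
  have : (2:ℝ) = 1 + 1 := by norm_num
  rw [this, qNum_succ hq0 hq1]
  unfold qNum
  rw [Real.rpow_one]
  have h1 : (1:ℝ) - q ≠ 0 := by linarith
  field_simp

lemma one_le_gammaD {q mu : ℝ} (hq0 : 0 < q) (hq1 : q < 1) (hmu : 1/2 < mu) (k : ℕ) :
    1 ≤ gammaD mu q k := by
  induction k with
  | zero => simp [gammaD]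
  | succ m ih =>
    rw [gammaD]
    have harg : (1:ℝ) ≤ 2 * mu * (theta (m+1) : ℝ) + ((m : ℝ) + 1) := by
      have h1 : (0:ℝ) ≤ (theta (m+1) : ℝ) := Nat.cast_nonneg _
      have h2 : (0:ℝ) ≤ (m : ℝ) := Nat.cast_nonneg _
      nlinarith
    have := one_le_qNum hq0 hq1 harg
    nlinarith

lemma gammaD_pos {q mu : ℝ} (hq0 : 0 < q) (hq1 : q < 1) (hmu : 1/2 < mu) (k : ℕ) :
    0 < gammaD mu q k := lt_of_lt_of_le one_pos (one_le_gammaD hq0 hq1 hmu k)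

lemma tri (k : ℕ) : (k+1)*((k+1)-1)/2 = k*(k-1)/2 + k := by
  rw [← Nat.choose_two_right, ← Nat.choose_two_right, Nat.choose_succ_succ]
  simp [Nat.choose_one_right, Nat.add_comm]

lemma argQ_ge_one {mu : ℝ} (hmu : 1/2 < mu) (k : ℕ) :
    (1:ℝ) ≤ 2 * mu * (theta (k+1) : ℝ) + ((k : ℝ) + 1) := by
  have h1 : (0:ℝ) ≤ (theta (k+1) : ℝ) := Nat.cast_nonneg _
  have h2 : (0:ℝ) ≤ (k : ℝ) := Nat.cast_nonneg _
  nlinarith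

lemma P_nonneg {q mu : ℝ} (hq0 : 0 < q) (hq1 : q < 1) (hmu : 1/2 < mu) {z : ℝ} (hz : 0 ≤ z) (k : ℕ) :
    0 ≤ q ^ (k*(k-1)/2) * z ^ k / gammaD mu q k :=
  div_nonneg (mul_nonneg (pow_nonneg hq0.le _) (pow_nonneg hz _)) (gammaD_pos hq0 hq1 hmu k).le

lemma P_succ {q mu : ℝ} (hq0 : 0 < q) (hq1 : q < 1) (hmu : 1/2 < mu) (z : ℝ) (k : ℕ) :
    q ^ ((k+1)*((k+1)-1)/2) * z ^ (k+1) / gammaD mu q (k+1)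
      = (q ^ k * z / qNum q (2 * mu * (theta (k + 1) : ℝ) + ((k : ℝ) + 1)))
        * (q ^ (k*(k-1)/2) * z ^ k / gammaD mu q k) := by
  have hQ : qNum q (2 * mu * (theta (k + 1) : ℝ) + ((k : ℝ) + 1)) ≠ 0 :=
    (qNum_pos hq0 hq1 (lt_of_lt_of_le one_pos (argQ_ge_one hmu k))).ne'
  have hg : gammaD mu q k ≠ 0 := (gammaD_pos hq0 hq1 hmu k).ne'
  rw [tri, pow_add, gammaD]
  field_simp
  ring

lemma summable_P {q mu : ℝ} (hq0 : 0 < q) (hq1 : q < 1) (hmu : 1/2 < mu) {z : ℝ} (hz : 0 ≤ z) :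
    Summable (fun k : ℕ => q ^ (k*(k-1)/2) * z ^ k / gammaD mu q k) := by
  apply summable_of_ratio_norm_eventually_le (r := 1/2) (by norm_num)
  have ht : Tendsto (fun k : ℕ => q ^ k * z) atTop (nhds 0) := by
    simpa using (tendsto_pow_atTop_nhds_zero_of_lt_one hq0.le hq1).mul_const z
  filter_upwards [ht.eventually_le_const (by norm_num : (0:ℝ) < 1/2)] with k hk
  have hnn := P_nonneg hq0 hq1 hmu hz
  rw [Real.norm_of_nonneg (hnn (k+1)), Real.norm_of_nonneg (hnn k), P_succ hq0 hq1 hmu z k]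
  have hQ : (1:ℝ) ≤ qNum q (2 * mu * (theta (k + 1) : ℝ) + ((k : ℝ) + 1)) :=
    one_le_qNum hq0 hq1 (argQ_ge_one hmu k)
  have hr : q ^ k * z / qNum q (2 * mu * (theta (k + 1) : ℝ) + ((k : ℝ) + 1)) ≤ 1/2 :=
    le_trans (div_le_self (mul_nonneg (pow_nonneg hq0.le _) hz) hQ) hk
  exact mul_le_mul_of_nonneg_right hr (hnn k)

lemma one_le_EDunkl {q mu : ℝ} (hq0 : 0 < q) (hq1 : q < 1) (hmu : 1/2 < mu) {z : ℝ} (hz : 0 ≤ z) :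
    1 ≤ EDunkl mu q z := by
  have h := Summable.le_tsum (summable_P hq0 hq1 hmu hz) 0 (fun i _ => P_nonneg hq0 hq1 hmu hz i)
  simpa [gammaD, EDunkl] using h

lemma lowB_zero (q mu : ℝ) (n : ℕ) : lowB q mu n 0 = 0 := by
  simp [lowB, theta, qNum]

lemma P_mul_lowB_succ {q mu : ℝ} (hq0 : 0 < q) (hq1 : q < 1) (hmu : 1/2 < mu) {n : ℕ}
    (hn : 0 < n) (z : ℝ) (k : ℕ) :
    q ^ ((k+1)*((k+1)-1)/2) * z ^ (k+1) / gammaD mu q (k+1) * lowB q mu n (k+1)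
      = (q * z / qNum q (n:ℝ)) * (q ^ (k*(k-1)/2) * z ^ k / gammaD mu q k) := by
  have hQ : qNum q (2 * mu * (theta (k + 1) : ℝ) + ((k : ℝ) + 1)) ≠ 0 :=
    (qNum_pos hq0 hq1 (lt_of_lt_of_le one_pos (argQ_ge_one hmu k))).ne'
  have hg : gammaD mu q k ≠ 0 := (gammaD_pos hq0 hq1 hmu k).ne'
  have hnq : qNum q (n:ℝ) ≠ 0 :=
    (qNum_pos hq0 hq1 (by exact_mod_cast hn : (0:ℝ) < (n:ℝ))).ne'
  unfold lowB
  have harg : ((k+1:ℕ):ℝ) + 2 * mu * (theta (k+1) : ℝ)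
      = 2 * mu * (theta (k + 1) : ℝ) + ((k : ℝ) + 1) := by push_cast; ring
  rw [harg]
  have hpow : q ^ (((k+1:ℕ):ℝ) - 2) = q ^ k / q := by
    push_cast
    rw [show ((k:ℝ) + 1 - 2) = (k:ℝ) + (-1) by ring, Real.rpow_add hq0, Real.rpow_neg_one,
      Real.rpow_natCast]
    ring
  rw [hpow, tri, pow_add, gammaD]
  have hqk : q ^ k ≠ 0 := pow_ne_zero _ hq0.ne'
  field_simp
  ring

lemma summable_P_lowB {q mu : ℝ} (hq0 : 0 < q) (hq1 : q < 1) (hmu : 1/2 < mu) {n : ℕ}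
    (hn : 0 < n) {z : ℝ} (hz : 0 ≤ z) :
    Summable (fun k : ℕ => q ^ (k*(k-1)/2) * z ^ k / gammaD mu q k * lowB q mu n k) := by
  rw [← summable_nat_add_iff 1]
  have : (fun k : ℕ => q ^ ((k+1)*((k+1)-1)/2) * z ^ (k+1) / gammaD mu q (k+1) * lowB q mu n (k+1))
      = fun k : ℕ => (q * z / qNum q (n:ℝ)) * (q ^ (k*(k-1)/2) * z ^ k / gammaD mu q k) :=
    funext fun k => P_mul_lowB_succ hq0 hq1 hmu hn z k
  exact this ▸ (summable_P hq0 hq1 hmu hz).mul_left _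

lemma tsum_P_lowB {q mu : ℝ} (hq0 : 0 < q) (hq1 : q < 1) (hmu : 1/2 < mu) {n : ℕ}
    (hn : 0 < n) {z : ℝ} (hz : 0 ≤ z) :
    ∑' k : ℕ, q ^ (k*(k-1)/2) * z ^ k / gammaD mu q k * lowB q mu n k
      = q * z / qNum q (n:ℝ) * EDunkl mu q z := by
  rw [Summable.tsum_eq_zero_add (summable_P_lowB hq0 hq1 hmu hn hz)]
  simp only [P_mul_lowB_succ hq0 hq1 hmu hn z, lowB_zero, mul_zero, zero_add]
  rw [tsum_mul_left, EDunkl]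

lemma jacksonInt_affine {q : ℝ} (hq0 : 0 < q) (hq1 : q < 1) (c₁ c₀ a b : ℝ) :
    jacksonInt q (fun s => c₁ * s + c₀) a b
      = c₁ * (b^2 - a^2) / (1 + q) + c₀ * (b - a) := by
  have hq2 : q^2 < 1 := by nlinarith
  have hs1 : Summable (fun j : ℕ => q ^ j) := summable_geometric_of_lt_one hq0.le hq1
  have hs2 : Summable (fun j : ℕ => (q^2) ^ j) :=
    summable_geometric_of_lt_one (by positivity) hq2
  have hgeom : ∑' j : ℕ, q ^ j = (1 - q)⁻¹ := tsum_geometric_of_lt_one hq0.le hq1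
  have hgeom2 : ∑' j : ℕ, (q^2) ^ j = (1 - q^2)⁻¹ :=
    tsum_geometric_of_lt_one (by positivity) hq2
  have key : ∀ c : ℝ, ∑' j : ℕ, q ^ j * (c₁ * (c * q ^ j) + c₀)
      = c₁ * c * (1 - q^2)⁻¹ + c₀ * (1 - q)⁻¹ := by
    intro c
    have h1 : (fun j : ℕ => q ^ j * (c₁ * (c * q ^ j) + c₀))
        = fun j : ℕ => (c₁ * c) * (q^2)^j + c₀ * q^j := by
      funext j; ring
    rw [h1, Summable.tsum_add (hs2.mul_left _) (hs1.mul_left _), tsum_mul_left, tsum_mul_left,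
      hgeom, hgeom2]
  unfold jacksonInt
  rw [key a, key b]
  have h1 : (1:ℝ) - q ≠ 0 := by linarith
  have h2 : (1:ℝ) + q ≠ 0 := by linarith
  have h3 : (1:ℝ) - q^2 ≠ 0 := by nlinarith
  field_simp
  ring

lemma jacksonInt_const {q : ℝ} (hq0 : 0 < q) (hq1 : q < 1) (c a b : ℝ) :
    jacksonInt q (fun _ => c) a b = c * (b - a) := by
  have h := jacksonInt_affine hq0 hq1 0 c a b
  simp only [zero_mul, zero_add, zero_div] at h
  simpa using h

lemma uppB_eq {q mu : ℝ} (hq0 : 0 < q) (hq1 : q < 1) {n : ℕ} (hn : 0 < n) (k : ℕ) :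
    uppB q mu n k = lowB q mu n k + 1 / qNum q (n:ℝ) := by
  unfold uppB lowB
  congr 1
  have harg : (k:ℝ) + 1 + 2*mu*(theta k : ℝ) = ((k:ℝ) + 2*mu*(theta k:ℝ)) + 1 := by ring
  rw [harg, qNum_succ hq0 hq1]
  rw [show (k:ℝ) - 1 = ((k:ℝ) - 2) + 1 by ring, Real.rpow_add_one hq0.ne']
  have h1 : q ^ ((k:ℝ) - 2) ≠ 0 := (Real.rpow_pos_of_pos hq0 _).ne'
  have h2 : qNum q (n:ℝ) ≠ 0 :=
    (qNum_pos hq0 hq1 (by exact_mod_cast hn : (0:ℝ) < (n:ℝ))).ne'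
  field_simp
  ring

lemma key_sum {q mu : ℝ} (hq0 : 0 < q) (hq1 : q < 1) (hmu : 1/2 < mu) {n : ℕ} (hn : 0 < n)
    {x : ℝ} (hx : 0 ≤ x) (c₁ c₀ : ℝ) :
    ∑' k : ℕ, (qNum q (n:ℝ) * x) ^ k / gammaD mu q k * q ^ (k*(k-1)/2) *
        jacksonInt q (fun s => c₁ * s + c₀) (lowB q mu n k) (uppB q mu n k)
      = EDunkl mu q (qNum q (n:ℝ) * x) *
          (c₁ * (2*q*x + 1/qNum q (n:ℝ)) / (1+q) + c₀) / qNum q (n:ℝ) := by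
  have hNpos : 0 < qNum q (n:ℝ) :=
    qNum_pos hq0 hq1 (by exact_mod_cast hn : (0:ℝ) < (n:ℝ))
  set N := qNum q (n:ℝ) with hN
  have hz : 0 ≤ N * x := mul_nonneg hNpos.le hx
  have h2 : (1:ℝ) + q ≠ 0 := by linarith
  have hterm : ∀ k : ℕ,
      (N * x) ^ k / gammaD mu q k * q ^ (k*(k-1)/2) *
        jacksonInt q (fun s => c₁ * s + c₀) (lowB q mu n k) (uppB q mu n k)
      = (2*c₁/((1+q)*N)) * (q ^ (k*(k-1)/2) * (N*x) ^ k / gammaD mu q k * lowB q mu n k)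
        + (c₁/((1+q)*N^2) + c₀/N) * (q ^ (k*(k-1)/2) * (N*x) ^ k / gammaD mu q k) := by
    intro k
    have hg : gammaD mu q k ≠ 0 := (gammaD_pos hq0 hq1 hmu k).ne'
    rw [jacksonInt_affine hq0 hq1, uppB_eq hq0 hq1 hn k, ← hN]
    field_simp
    ring
  rw [tsum_congr hterm, Summable.tsum_add ((summable_P_lowB hq0 hq1 hmu hn hz).mul_left _)
    ((summable_P hq0 hq1 hmu hz).mul_left _), tsum_mul_left, tsum_mul_left,
    tsum_P_lowB hq0 hq1 hmu hn hz, ← hN]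
  have hE : EDunkl mu q (N * x) = ∑' k : ℕ, q ^ (k*(k-1)/2) * (N*x) ^ k / gammaD mu q k := rfl
  rw [← hE]
  field_simp
  ring

/-- `K*_{n₁,n₂}(e_{1,0} - x; q₁, q₂; x, y)
  = (n₁/(n₁+β₁))(α₁/n₁ + 1/([2]_{q₁}[n₁]_{q₁})) + (2n₁q₁/([2]_{q₁}(n₁+β₁)) - 1) x`. -/
theorem KB_e10_sub_x (n₁ n₂ : ℕ) (hn₁ : 0 < n₁) (hn₂ : 0 < n₂)
    (q₁ q₂ mu₁ mu₂ α₁ α₂ β₁ β₂ x y : ℝ)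
    (hq₁0 : 0 < q₁) (hq₁1 : q₁ < 1) (hq₂0 : 0 < q₂) (hq₂1 : q₂ < 1)
    (hmu₁ : 1 / 2 < mu₁) (hmu₂ : 1 / 2 < mu₂)
    (hα₁ : 0 ≤ α₁) (hα₂ : 0 ≤ α₂) (hβ₁ : 0 ≤ β₁) (hβ₂ : 0 ≤ β₂)
    (hx : 0 ≤ x) (hy : 0 ≤ y) :
    KB n₁ n₂ q₁ q₂ mu₁ mu₂ α₁ α₂ β₁ β₂ (fun u _ => u - x) x y =
      (n₁ : ℝ) / ((n₁ : ℝ) + β₁) * (α₁ / (n₁ : ℝ) + 1 / (qNum q₁ 2 * qNum q₁ (n₁ : ℝ)))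
        + (2 * (n₁ : ℝ) * q₁ / (qNum q₁ 2 * ((n₁ : ℝ) + β₁)) - 1) * x := by
  
  have hn₁R : (0:ℝ) < (n₁:ℝ) := by exact_mod_cast hn₁
  have hn₂R : (0:ℝ) < (n₂:ℝ) := by exact_mod_cast hn₂
  have hN₁ : 0 < qNum q₁ (n₁:ℝ) := qNum_pos hq₁0 hq₁1 hn₁R
  have hN₂ : 0 < qNum q₂ (n₂:ℝ) := qNum_pos hq₂0 hq₂1 hn₂R
  have hE₁ : 0 < EDunkl mu₁ q₁ (qNum q₁ (n₁:ℝ) * x) :=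
    lt_of_lt_of_le one_pos (one_le_EDunkl hq₁0 hq₁1 hmu₁ (mul_nonneg hN₁.le hx))
  have hE₂ : 0 < EDunkl mu₂ q₂ (qNum q₂ (n₂:ℝ) * y) :=
    lt_of_lt_of_le one_pos (one_le_EDunkl hq₂0 hq₂1 hmu₂ (mul_nonneg hN₂.le hy))
  have hnb : ((n₁:ℝ) + β₁) ≠ 0 := by linarith
  have h1q : (1:ℝ) + q₁ ≠ 0 := by linarith
  unfold KB
  have hsummand : ∀ k₁ k₂ : ℕ,
      (qNum q₁ (n₁:ℝ) * x) ^ k₁ / gammaD mu₁ q₁ k₁ *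
        ((qNum q₂ (n₂:ℝ) * y) ^ k₂ / gammaD mu₂ q₂ k₂) *
        q₁ ^ (k₁ * (k₁ - 1) / 2) * q₂ ^ (k₂ * (k₂ - 1) / 2) *
        jacksonInt q₂ (fun t =>
            jacksonInt q₁ (fun s =>
                (fun u (_:ℝ) => u - x) (((n₁:ℝ) * s + α₁) / ((n₁:ℝ) + β₁))
                  (((n₂:ℝ) * t + α₂) / ((n₂:ℝ) + β₂)))
              (lowB q₁ mu₁ n₁ k₁) (uppB q₁ mu₁ n₁ k₁))
          (lowB q₂ mu₂ n₂ k₂) (uppB q₂ mu₂ n₂ k₂)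
      = ((qNum q₁ (n₁:ℝ) * x) ^ k₁ / gammaD mu₁ q₁ k₁ * q₁ ^ (k₁ * (k₁ - 1) / 2) *
          jacksonInt q₁ (fun s => ((n₁:ℝ)/((n₁:ℝ)+β₁)) * s + (α₁/((n₁:ℝ)+β₁) - x))
            (lowB q₁ mu₁ n₁ k₁) (uppB q₁ mu₁ n₁ k₁) / qNum q₂ (n₂:ℝ)) *
        (q₂ ^ (k₂ * (k₂ - 1) / 2) * (qNum q₂ (n₂:ℝ) * y) ^ k₂ / gammaD mu₂ q₂ k₂) := by
    intro k₁ k₂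
    have h1 : (fun t : ℝ => jacksonInt q₁ (fun s =>
          (fun u (_:ℝ) => u - x) (((n₁:ℝ) * s + α₁) / ((n₁:ℝ) + β₁))
            (((n₂:ℝ) * t + α₂) / ((n₂:ℝ) + β₂)))
          (lowB q₁ mu₁ n₁ k₁) (uppB q₁ mu₁ n₁ k₁))
        = (fun _ : ℝ => jacksonInt q₁
            (fun s => ((n₁:ℝ)/((n₁:ℝ)+β₁)) * s + (α₁/((n₁:ℝ)+β₁) - x))
            (lowB q₁ mu₁ n₁ k₁) (uppB q₁ mu₁ n₁ k₁)) := by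
      funext t
      congr 1
      funext s
      show ((n₁:ℝ) * s + α₁) / ((n₁:ℝ) + β₁) - x
          = ((n₁:ℝ)/((n₁:ℝ)+β₁)) * s + (α₁/((n₁:ℝ)+β₁) - x)
      field_simp
      ring
    rw [h1, jacksonInt_const hq₂0 hq₂1, uppB_eq hq₂0 hq₂1 hn₂ k₂]
    ring
  rw [tsum_congr (fun k₁ => tsum_congr (fun k₂ => hsummand k₁ k₂))]
  have hinner : ∀ k₁ : ℕ,
      ∑' k₂ : ℕ, ((qNum q₁ (n₁:ℝ) * x) ^ k₁ / gammaD mu₁ q₁ k₁ * q₁ ^ (k₁ * (k₁ - 1) / 2) *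
          jacksonInt q₁ (fun s => ((n₁:ℝ)/((n₁:ℝ)+β₁)) * s + (α₁/((n₁:ℝ)+β₁) - x))
            (lowB q₁ mu₁ n₁ k₁) (uppB q₁ mu₁ n₁ k₁) / qNum q₂ (n₂:ℝ)) *
        (q₂ ^ (k₂ * (k₂ - 1) / 2) * (qNum q₂ (n₂:ℝ) * y) ^ k₂ / gammaD mu₂ q₂ k₂)
      = (EDunkl mu₂ q₂ (qNum q₂ (n₂:ℝ) * y) / qNum q₂ (n₂:ℝ)) *
          ((qNum q₁ (n₁:ℝ) * x) ^ k₁ / gammaD mu₁ q₁ k₁ * q₁ ^ (k₁ * (k₁ - 1) / 2) *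
            jacksonInt q₁ (fun s => ((n₁:ℝ)/((n₁:ℝ)+β₁)) * s + (α₁/((n₁:ℝ)+β₁) - x))
              (lowB q₁ mu₁ n₁ k₁) (uppB q₁ mu₁ n₁ k₁)) := by
    intro k₁
    rw [tsum_mul_left]
    have hE : EDunkl mu₂ q₂ (qNum q₂ (n₂:ℝ) * y)
        = ∑' k₂ : ℕ, q₂ ^ (k₂ * (k₂ - 1) / 2) * (qNum q₂ (n₂:ℝ) * y) ^ k₂ / gammaD mu₂ q₂ k₂ :=
      rfl
    rw [← hE]
    ring
  rw [tsum_congr hinner, tsum_mul_left,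
    key_sum hq₁0 hq₁1 hmu₁ hn₁ hx ((n₁:ℝ)/((n₁:ℝ)+β₁)) (α₁/((n₁:ℝ)+β₁) - x),
    qNum_two hq₁0 hq₁1]
  field_simp
  ring
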